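/- arXiv:1409.2241 — 3 statements merged into one kernel-verified Lean document; each statement's English description precedes it below -/
import Mathlib

section
/- Let R be a real closed field whose value group Γ_R (of the standard real valuation) is divisible. Then there exists a section for R, i.e., a group homomorphism s : Γ_R → (R_{>0}, ·) with v_R(s(γ)) = γ for all γ ∈ Γ_R. -/
theorem aux_root {R : Type*} [Field R] [LinearOrder R] [IsStrictOrderedRing R]
    (hsq : ∀ x : R, 0 ≤ x → ∃ y : R, y ^ 2 = x)
    (hodd : ∀ p : Polynomial R, Odd p.natDegree → ∃ x : R, p.eval x = 0) :
    ∀ n : ℕ, n ≠ 0 → ∀ x : R, 0 < x → ∃ y : R, 0 < y ∧ y ^ n = x := by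
  intro n
  induction n using Nat.strong_induction_on with
  | _ n IH =>
    intro hn x hx
    rcases Nat.even_or_odd n with he | ho
    · obtain ⟨m, hm⟩ := he
      have hm0 : m ≠ 0 := by omega
      obtain ⟨z, hz, hzm⟩ := IH m (by omega) hm0 x hx
      obtain ⟨y, hy⟩ := hsq z hz.le
      refine ⟨|y|, ?_, ?_⟩
      · have : y ≠ 0 := by rintro rfl; simp at hy; exact hz.ne hy
        exact abs_pos.mpr this
      · have : |y| ^ 2 = z := by rw [sq_abs, hy]
        rw [hm, ← two_mul, pow_mul, this, hzm]
    · obtain ⟨y, hy⟩ := hodd (Polynomial.X ^ n - Polynomial.C x)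
        (by rwa [Polynomial.natDegree_X_pow_sub_C])
      simp only [Polynomial.eval_sub, Polynomial.eval_pow, Polynomial.eval_X,
        Polynomial.eval_C, sub_eq_zero] at hy
      refine ⟨y, ?_, hy⟩
      rcases lt_trichotomy y 0 with h | h | h
      · exact absurd (hy ▸ ho.pow_neg h) (not_lt.mpr hx.le)
      · subst h; rw [zero_pow hn] at hy; exact absurd hy.symm hx.ne'
      · exact h

set_option maxHeartbeats 1000000 in
set_option synthInstance.maxHeartbeats 400000 in
/-- Let `R` be a real closed field whose value group `Γ_R = Rˣ / O_Rˣ` (the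
quotient of the units by the subgroup `U` of bounded units with bounded
inverse) is divisible. Then there exists a section for `R`: a group
homomorphism `s` from the value group to the multiplicative group of positive
elements of `R` with `v_R (s γ) = γ` for all `γ`. -/
theorem stmt_8 (R : Type*) [Field R] [LinearOrder R] [IsStrictOrderedRing R]
    (hsq : ∀ x : R, 0 ≤ x → ∃ y : R, y ^ 2 = x)
    (hodd : ∀ p : Polynomial R, Odd p.natDegree → ∃ x : R, p.eval x = 0)
    (U : Subgroup Rˣ)
    (hU : ∀ u : Rˣ, u ∈ U ↔
      ((∃ n : ℕ, -(n : R) ≤ (u : R) ∧ (u : R) ≤ n) ∧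
       (∃ n : ℕ, -(n : R) ≤ ((u⁻¹ : Rˣ) : R) ∧ ((u⁻¹ : Rˣ) : R) ≤ n)))
    (hdiv : ∀ γ : Rˣ ⧸ U, ∀ n : ℕ, 1 ≤ n → ∃ δ : Rˣ ⧸ U, δ ^ n = γ) :
    ∃ s : (Rˣ ⧸ U) →* Rˣ,
      (∀ γ : Rˣ ⧸ U, 0 < ((s γ : Rˣ) : R)) ∧
      (∀ γ : Rˣ ⧸ U, (QuotientGroup.mk (s γ) : Rˣ ⧸ U) = γ) := by
  classical
  have hroot := aux_root hsq hodd
  have hneg : (-1 : Rˣ) ∈ U := by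
    rw [hU]
    refine ⟨⟨1, ?_⟩, ⟨1, ?_⟩⟩ <;> simp
  -- powers bounded implies bounded
  have hUpow : ∀ (u : Rˣ), (0 : R) < u → ∀ n : ℕ, n ≠ 0 → u ^ n ∈ U → u ∈ U := by
    intro u hu n hn hmem
    rw [hU] at hmem ⊢
    obtain ⟨⟨N, _, h1⟩, ⟨M, _, h2⟩⟩ := hmem
    have hinv : (0 : R) < ((u : R))⁻¹ := inv_pos.mpr hu
    constructor
    · refine ⟨N + 1, ?_, ?_⟩
      · push_cast; nlinarith
      · push_cast
        have hpow : ((u : R)) ^ n ≤ N := by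
          rw [← Units.val_pow_eq_pow_val]; exact h1
        rcases le_or_gt (u : R) 1 with h | h
        · have h0 : (0 : R) ≤ (N : R) := le_trans (by positivity) hpow
          linarith
        · have := le_self_pow₀ h.le hn
          linarith
    · have hpow : (((u : R))⁻¹) ^ n ≤ M := by
        have : ((((u ^ n)⁻¹ : Rˣ)) : R) = (((u : R))⁻¹) ^ n := by
          rw [← inv_pow, Units.val_pow_eq_pow_val, Units.val_inv_eq_inv_val]
        rwa [this] at h2
      refine ⟨M + 1, ?_, ?_⟩
      · push_cast
        nlinarith
      · push_cast
        rcases le_or_gt ((u : R))⁻¹ 1 with h | h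
        · have h0 : (0 : R) ≤ (M : R) := le_trans (by positivity) hpow
          linarith
        · have := le_self_pow₀ h.le hn
          linarith
  set P := Units.posSubgroup R with hPdef
  set G := U.subgroupOf P with hGdef
  -- G is rootable
  have hGroot : ∀ (a : ↥G) (n : ℕ), n ≠ 0 → ∃ b : ↥G, b ^ n = a := by
    intro a n hn
    have hupos : (0 : R) < ((a : ↥P) : Rˣ) := (a : ↥P).2
    obtain ⟨y, hy, hyn⟩ := hroot n hn _ hupos
    set b : Rˣ := Units.mk0 y hy.ne' with hbdef
    have hbn : b ^ n = ((a : ↥P) : Rˣ) := by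
      ext; rw [Units.val_pow_eq_pow_val]; exact hyn
    have hbU : b ∈ U := by
      refine hUpow b hy n hn ?_
      rw [hbn]; exact Subgroup.mem_subgroupOf.mp a.2
    refine ⟨⟨⟨b, hy⟩, Subgroup.mem_subgroupOf.mpr hbU⟩, ?_⟩
    refine Subtype.ext (Subtype.ext ?_)
    push_cast
    exact hbn
  letI : RootableBy ↥G ℕ :=
    rootableByOfPowLeftSurj _ _ (fun {n} hn a => (hGroot a n hn).imp fun b hb => hb)
  letI : RootableBy ↥G ℤ := Group.rootableByIntOfRootableByNat ↥G
  letI : DivisibleBy (Additive ↥G) ℤ :=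
    { div := fun a n => Additive.ofMul (RootableBy.root a.toMul n)
      div_zero := fun a => congrArg Additive.ofMul (RootableBy.root_zero a.toMul)
      div_cancel := fun {n} a hn => by
        rw [← ofMul_zpow, RootableBy.root_cancel a.toMul hn]
        rfl }
  have hBaer : Module.Baer ℤ (Additive ↥G) := Module.Baer.of_divisible _
  have hinj : Function.Injective ⇑(MonoidHom.toAdditive G.subtype) := by
    intro a b h
    have h' : G.subtype (Additive.toMul a) = G.subtype (Additive.toMul b) := h
    have h2 := Subgroup.subtype_injective G h'
    have h3 : Additive.ofMul (Additive.toMul a) = Additive.ofMul (Additive.toMul b) :=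
      congrArg _ h2
    exact h3
  obtain ⟨r, hr⟩ := hBaer.extension_property_addMonoidHom
    (MonoidHom.toAdditive G.subtype) hinj (AddMonoidHom.id _)
  set r' : ↥P →* ↥G := MonoidHom.toAdditive.symm r with hr'def
  have hretr : ∀ d : ↥G, r' (G.subtype d) = d := by
    intro d
    exact DFunLike.congr_fun hr (Additive.ofMul d)
  -- absolute value map into P
  have habsmem : ∀ u : Rˣ, Units.map (absHom (α := R)).toMonoidHom u ∈ P := by
    intro u
    rw [Units.mem_posSubgroup]
    show (0 : R) < |(u : R)|
    exact abs_pos.mpr u.ne_zero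
  set absP : Rˣ →* ↥P :=
    (Units.map (absHom (α := R)).toMonoidHom).codRestrict P habsmem with habsPdef
  have habsval : ∀ u : Rˣ, (((absP u : ↥P) : Rˣ) : R) = |(u : R)| := fun u => rfl
  set f1 : Rˣ →* Rˣ := P.subtype.comp absP with hf1def
  set f2 : Rˣ →* Rˣ := P.subtype.comp (G.subtype.comp (r'.comp absP)) with hf2def
  have hf1val : ∀ u : Rˣ, ((f1 u : Rˣ) : R) = |(u : R)| := fun u => rfl
  have hf2U : ∀ u : Rˣ, f2 u ∈ U := by
    intro u
    exact Subgroup.mem_subgroupOf.mp (r' (absP u)).2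
  have hf2P : ∀ u : Rˣ, (0 : R) < (f2 u : R) := by
    intro u
    exact ((r' (absP u) : ↥P)).2
  -- f1 u is u or -u
  have hf1cases : ∀ u : Rˣ, f1 u = u ∨ f1 u = -u := by
    intro u
    rcases le_or_gt (u : R) 0 with h | h
    · right; ext; rw [hf1val, Units.val_neg]; exact abs_of_nonpos h
    · left; ext; rw [hf1val]; exact abs_of_pos h
  have hf1U : ∀ u ∈ U, f1 u ∈ U := by
    intro u hu
    rcases hf1cases u with h | h
    · rw [h]; exact hu
    · rw [h, show (-u : Rˣ) = -1 * u by rw [neg_one_mul]]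
      exact U.mul_mem hneg hu
  have hker : ∀ u ∈ U, (f1 * f2⁻¹) u = 1 := by
    intro u hu
    have hmem : absP u ∈ G := Subgroup.mem_subgroupOf.mpr (hf1U u hu)
    have : f2 u = f1 u := by
      show P.subtype (G.subtype (r' (absP u))) = P.subtype (absP u)
      rw [show absP u = G.subtype (⟨absP u, hmem⟩ : ↥G) from rfl, hretr]
    show f1 u * (f2 u)⁻¹ = 1
    rw [this, mul_inv_cancel]
  refine ⟨QuotientGroup.lift U (f1 * f2⁻¹) (fun u hu => MonoidHom.mem_ker.mpr (hker u hu)), ?_, ?_⟩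
  · intro γ
    induction γ using QuotientGroup.induction_on with
    | H u =>
      rw [QuotientGroup.lift_mk]
      show (0 : R) < ((f1 u * (f2 u)⁻¹ : Rˣ) : R)
      rw [Units.val_mul, hf1val]
      have h2 : (0 : R) < (((f2 u)⁻¹ : Rˣ) : R) := by
        rw [Units.val_inv_eq_inv_val]
        exact inv_pos.mpr (hf2P u)
      have h1 : (0 : R) < |(u : R)| := abs_pos.mpr u.ne_zero
      exact mul_pos h1 h2
  · intro γ
    induction γ using QuotientGroup.induction_on with
    | H u =>
      rw [QuotientGroup.lift_mk]
      show (QuotientGroup.mk (f1 u * (f2 u)⁻¹) : Rˣ ⧸ U) = QuotientGroup.mk u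
      rw [QuotientGroup.eq]
      have h2 : (f2 u)⁻¹ ∈ U := U.inv_mem (hf2U u)
      rw [mul_inv_rev, inv_inv]
      rcases hf1cases u with h | h
      · rw [h, mul_assoc, inv_mul_cancel, mul_one]
        exact hf2U u
      · rw [h, mul_assoc]
        have hnu : ((-u)⁻¹ : Rˣ) * u = -1 := by
          ext
          rw [Units.val_mul, Units.val_inv_eq_inv_val, Units.val_neg, Units.val_neg,
            Units.val_one]
          field_simp
        rw [hnu]
        exact U.mul_mem (hf2U u) hneg
end

section
/- Let Γ be a divisible ordered abelian group and 𝓡 = ℝ((t^Γ)). The logarithmic series L(x) = Σ_{j≥1} (-1)^{j+1} x^j / j converges (i.e., is a well-defined Hahn series) when evaluated at any infinitesimal h ∈ m_𝓡, and the map log : ℝ_{>0} + m_𝓡 → O_𝓡 defined by log(a(1+h)) = log(a) + L(h) is a group isomorphism from the multiplicative group of positive units of O_𝓡 onto the additive group (O_𝓡, +), extending the real logarithm. -/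
noncomputable section
namespace Stmt12Aux
open PowerSeries

abbrev PS := PowerSeries ℝ

/-- coefficients of log(1+X) -/
def logC : ℕ → ℝ := fun n => if n = 0 then 0 else (-1)^(n+1)/n

def logPS : PS := PowerSeries.mk logC

def u : PS := PowerSeries.exp ℝ - 1

lemma coeff_logPS (n : ℕ) : coeff n logPS = logC n := coeff_mk _ _

lemma logC_succ (j : ℕ) : logC (j+1) = (-1)^j / (j+1) := by
  simp only [logC, Nat.succ_ne_zero, if_false]
  rw [pow_succ, pow_succ]
  push_cast
  ring

lemma constantCoeff_u : constantCoeff u = 0 := by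
  simp [u, constantCoeff_exp]

lemma coeff_pow_eq_zero {f : PS} (hf : constantCoeff f = 0) {j n : ℕ} (hn : n < j) :
    coeff n (f ^ j) = 0 := by
  have h1 : (X : PS) ∣ f := X_dvd_iff.2 hf
  have h2 : (X : PS) ^ j ∣ f ^ j := pow_dvd_pow_of_dvd h1 j
  exact X_pow_dvd_iff.mp h2 n hn

/-- the `j`-th term of log(1+u) -/
def G (j : ℕ) : PS := logC j • u ^ j

lemma G_zero : G 0 = 0 := by simp [G, logC]

lemma coeff_G_eq_zero {j n : ℕ} (hn : n < j) : coeff n (G j) = 0 := by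
  rw [G, map_smul, coeff_pow_eq_zero constantCoeff_u hn, smul_zero]

/-- formal sum of a sequence of power series with order at least the index -/
def sumPS (G : ℕ → PS) : PS := PowerSeries.mk fun n => ∑ j ∈ Finset.range (n+1), coeff n (G j)

lemma coeff_sumPS_eq {G : ℕ → PS} (hG : ∀ j n, n < j → coeff n (G j) = 0) (n N : ℕ)
    (hN : n < N) : coeff n (sumPS G) = ∑ j ∈ Finset.range N, coeff n (G j) := by
  rw [sumPS, coeff_mk]
  exact Finset.sum_subset (Finset.range_subset_range.2 hN)
    (fun j _ hj => hG j n (by simpa using hj))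

/-- the composite series log(exp X) -/
def F : PS := sumPS G

def FN (N : ℕ) : PS := ∑ j ∈ Finset.range N, G j

lemma coeff_F_eq (n N : ℕ) (hN : n < N) : coeff n F = coeff n (FN N) := by
  rw [F, coeff_sumPS_eq (fun j n h => coeff_G_eq_zero h) n N hN, FN, map_sum]

lemma derivative_exp : d⁄dX ℝ (exp ℝ) = exp ℝ := by
  ext n
  rw [coeff_derivative, coeff_exp, coeff_exp]
  have h0 : (((n+1).factorial : ℝ)) ≠ 0 := by positivity
  have h1 : ((n.factorial : ℝ)) ≠ 0 := by positivity
  simp only [eq_ratCast, Rat.cast_div, Rat.cast_one, Rat.cast_natCast]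
  rw [Nat.factorial_succ]
  push_cast
  field_simp

lemma derivative_u : d⁄dX ℝ u = exp ℝ := by
  rw [u, map_sub, derivative_exp]
  simp

lemma one_add_u : 1 + u = exp ℝ := by rw [u]; ring

lemma derivative_G_succ (j : ℕ) :
    d⁄dX ℝ (G (j+1)) = ((-1:ℝ))^j • (u ^ j * exp ℝ) := by
  rw [G, Derivation.map_smul, Derivation.leibniz_pow, derivative_u, logC_succ]
  have : ((j:ℝ)+1) ≠ 0 := by positivity
  rw [Nat.add_sub_cancel, ← Nat.cast_smul_eq_nsmul ℝ, smul_smul]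
  congr 1
  push_cast
  rw [div_mul_cancel₀ _ this]

lemma exp_mul_derivative_FN (N : ℕ) :
    exp ℝ * d⁄dX ℝ (FN (N+1)) = exp ℝ - ((-1:ℝ))^N • (u ^ N * exp ℝ) := by
  have key : ∀ j : ℕ, ((-1:ℝ))^j • (u ^ j * exp ℝ) - ((-1:ℝ))^(j+1) • (u ^ (j+1) * exp ℝ)
      = exp ℝ * d⁄dX ℝ (G (j+1)) := by
    intro j
    rw [derivative_G_succ, ← one_add_u]
    rw [pow_succ, mul_comm ((-1:ℝ)^j) (-1), neg_one_mul, neg_smul, sub_neg_eq_add]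
    rw [← smul_add, mul_smul_comm]
    congr 1
    ring
  have tele := Finset.sum_range_sub' (fun j => ((-1:ℝ))^j • (u ^ j * exp ℝ)) N
  calc exp ℝ * d⁄dX ℝ (FN (N+1))
      = ∑ j ∈ Finset.range (N+1), exp ℝ * d⁄dX ℝ (G j) := by
        rw [FN, map_sum, Finset.mul_sum]
    _ = ∑ j ∈ Finset.range N, exp ℝ * d⁄dX ℝ (G (j+1)) := by
        rw [Finset.sum_range_succ']
        simp [G_zero]
    _ = ∑ j ∈ Finset.range N,
          (((-1:ℝ))^j • (u ^ j * exp ℝ) - ((-1:ℝ))^(j+1) • (u ^ (j+1) * exp ℝ)) := by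
        exact Finset.sum_congr rfl fun j _ => (key j).symm
    _ = exp ℝ - ((-1:ℝ))^N • (u ^ N * exp ℝ) := by
        rw [tele]
        simp

lemma coeff_mul_congr {a b c : PS} {n : ℕ} (h : ∀ k ≤ n, coeff k a = coeff k b) :
    coeff n (c * a) = coeff n (c * b) := by
  rw [coeff_mul, coeff_mul]
  refine Finset.sum_congr rfl fun p hp => ?_
  have hp' : p.1 + p.2 = n := Finset.HasAntidiagonal.mem_antidiagonal.mp hp
  rw [h p.2 (by omega)]

lemma exp_mul_derivative_F : exp ℝ * d⁄dX ℝ F = exp ℝ := by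
  ext n
  have hcongr : ∀ k ≤ n, coeff k (d⁄dX ℝ F) = coeff k (d⁄dX ℝ (FN (n+2))) := by
    intro k hk
    rw [coeff_derivative, coeff_derivative, coeff_F_eq (k+1) (n+2) (by omega)]
  rw [coeff_mul_congr hcongr, exp_mul_derivative_FN (n+1), map_sub, map_smul]
  have : coeff n (u ^ (n+1) * exp ℝ) = 0 := by
    rw [coeff_mul]
    refine Finset.sum_eq_zero fun p hp => ?_
    have hp' : p.1 + p.2 = n := Finset.HasAntidiagonal.mem_antidiagonal.mp hp
    rw [coeff_pow_eq_zero constantCoeff_u (by omega : p.1 < n + 1), zero_mul]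
  rw [this, smul_zero, sub_zero]

lemma derivative_F : d⁄dX ℝ F = 1 := by
  have hu : constantCoeff (exp ℝ) ≠ 0 := by
    rw [constantCoeff_exp]; norm_num
  have := exp_mul_derivative_F
  calc d⁄dX ℝ F = ((exp ℝ)⁻¹ * exp ℝ) * d⁄dX ℝ F := by
        rw [PowerSeries.inv_mul_cancel _ hu, one_mul]
    _ = (exp ℝ)⁻¹ * (exp ℝ * d⁄dX ℝ F) := by ring
    _ = (exp ℝ)⁻¹ * exp ℝ := by rw [this]
    _ = 1 := PowerSeries.inv_mul_cancel _ hu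

lemma F_eq_X : F = X := by
  ext n
  match n with
  | 0 => simp [F, sumPS, coeff_mk, G_zero, coeff_X]
  | n+1 =>
    have h := congrArg (coeff n) derivative_F
    rw [coeff_derivative, coeff_one] at h
    rw [coeff_X]
    match n, h with
    | 0, h => simpa using h
    | m+1, h =>
      simp only [if_neg (by omega : ¬ m + 1 = 0)] at h
      have : (↑(m+1) + 1 : ℝ) ≠ 0 := by positivity
      have := mul_eq_zero.mp h
      simp only [Nat.add_eq, if_neg (by omega : ¬ m + 1 + 1 = 1)]
      tauto

section Hahn
open HahnSeries HahnSeries.SummableFamily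

variable {Γ : Type*} [AddCommGroup Γ] [LinearOrder Γ] [IsOrderedAddMonoid Γ]

lemma coeff_finsetSum {ι : Type*} (A : Finset ι) (f : ι → HahnSeries Γ ℝ) (g : Γ) :
    (∑ i ∈ A, f i).coeff g = ∑ i ∈ A, (f i).coeff g := by
  classical
  induction A using Finset.induction with
  | empty => simp
  | insert x A hx ih => simp [Finset.sum_insert hx, HahnSeries.coeff_add, ih]

instance : SMulCommClass ℝ (HahnSeries Γ ℝ) (HahnSeries Γ ℝ) :=
  ⟨fun r a b => by
    rw [smul_eq_mul, smul_eq_mul, ← HahnSeries.C_mul_eq_smul, ← HahnSeries.C_mul_eq_smul]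
    ring⟩

instance : IsScalarTower ℝ (HahnSeries Γ ℝ) (HahnSeries Γ ℝ) :=
  ⟨fun r a b => by
    rw [smul_eq_mul, smul_eq_mul, ← HahnSeries.C_mul_eq_smul, ← HahnSeries.C_mul_eq_smul]
    ring⟩

/-- scaled powers family -/
def pows (x : HahnSeries Γ ℝ) (hx : 0 < x.orderTop) (c : ℕ → ℝ) :
    SummableFamily Γ ℝ ℕ where
  toFun n := c n • x ^ n
  isPWO_iUnion_support' := by
    refine (isPWO_iUnion_support_powers (zero_le_orderTop_iff.mp hx.le)).mono ?_
    refine Set.iUnion_subset fun n g hg => ?_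
    refine Set.mem_iUnion.2 ⟨n, ?_⟩
    have : (c n • x ^ n).coeff g ≠ 0 := hg
    rw [HahnSeries.coeff_smul] at this
    exact right_ne_zero_of_smul this
  finite_co_support' g := by
    refine (pow_finite_co_support hx g).subset fun n hn => ?_
    have : (c n • x ^ n).coeff g ≠ 0 := hn
    rw [HahnSeries.coeff_smul] at this
    exact right_ne_zero_of_smul this

@[simp] lemma pows_apply {x : HahnSeries Γ ℝ} (hx : 0 < x.orderTop) (c : ℕ → ℝ) (n : ℕ) :
    pows x hx c n = c n • x ^ n := rfl

/-- evaluation of a power series at an infinitesimal Hahn series -/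
def ev (x : HahnSeries Γ ℝ) (hx : 0 < x.orderTop) (f : PS) : HahnSeries Γ ℝ :=
  (pows x hx (fun n => coeff n f)).hsum

lemma hsum_eq_single {s : SummableFamily Γ ℝ ℕ} (n0 : ℕ) (h : ∀ n, n ≠ n0 → s n = 0) :
    s.hsum = s n0 := by
  ext g
  rw [coeff_hsum]
  refine finsum_eq_single _ n0 fun n hn => ?_
  rw [h n hn]
  rfl

variable {x : HahnSeries Γ ℝ} (hx : 0 < x.orderTop)

lemma ev_add (f g : PS) : ev x hx (f + g) = ev x hx f + ev x hx g := by
  rw [ev, ev, ev, ← hsum_add]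
  congr 1
  apply SummableFamily.ext
  intro n
  exact add_smul _ _ _

lemma ev_one : ev x hx 1 = 1 := by
  rw [ev, hsum_eq_single 0 (fun n hn => by rw [pows_apply, PowerSeries.coeff_one, if_neg hn]; ext; simp)]
  simp

lemma ev_X : ev x hx X = x := by
  rw [ev, hsum_eq_single 1 (fun n hn => by rw [pows_apply, PowerSeries.coeff_X, if_neg hn]; ext; simp)]
  simp

lemma ev_rsmul (r : ℝ) (f : PS) : ev x hx (r • f) = r • ev x hx f := by
  rw [ev, ev, ← C_mul_eq_smul, ← hsum_smul]
  congr 1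
  apply SummableFamily.ext
  intro n
  rw [SummableFamily.smul_apply, pows_apply, pows_apply, map_smul, of_symm_smul_of_eq_mul, C_mul_eq_smul,
    smul_smul, smul_eq_mul]

/-- regrouping a summable family indexed by pairs along antidiagonals -/
def regroup (s : SummableFamily Γ ℝ (ℕ × ℕ)) : SummableFamily Γ ℝ ℕ where
  toFun n := ∑ p ∈ Finset.HasAntidiagonal.antidiagonal n, s p
  isPWO_iUnion_support' := by
    refine s.isPWO_iUnion_support.mono ?_
    refine Set.iUnion_subset fun n g hg => ?_
    have : (∑ p ∈ Finset.HasAntidiagonal.antidiagonal n, s p).coeff g ≠ 0 := hg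
    rw [coeff_finsetSum] at this
    obtain ⟨p, _, hp⟩ := Finset.exists_ne_zero_of_sum_ne_zero this
    exact Set.mem_iUnion.2 ⟨p, hp⟩
  finite_co_support' g := by
    refine ((s.finite_co_support' g).image (fun p => p.1 + p.2)).subset fun n hn => ?_
    have : (∑ p ∈ Finset.HasAntidiagonal.antidiagonal n, s p).coeff g ≠ 0 := hn
    rw [coeff_finsetSum] at this
    obtain ⟨p, hpmem, hp⟩ := Finset.exists_ne_zero_of_sum_ne_zero this
    exact ⟨p, hp, Finset.HasAntidiagonal.mem_antidiagonal.mp hpmem⟩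

@[simp] lemma regroup_apply (s : SummableFamily Γ ℝ (ℕ × ℕ)) (n : ℕ) :
    regroup s n = ∑ p ∈ Finset.HasAntidiagonal.antidiagonal n, s p := rfl

lemma hsum_regroup (s : SummableFamily Γ ℝ (ℕ × ℕ)) : (regroup s).hsum = s.hsum := by
  ext g
  rw [coeff_hsum, coeff_hsum]
  classical
  set T : Finset (ℕ × ℕ) := (s.finite_co_support' g).toFinset with hT
  set N : Finset ℕ := T.image (fun p => p.1 + p.2) with hN
  have hdisj : (↑N : Set ℕ).PairwiseDisjoint Finset.HasAntidiagonal.antidiagonal := by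
    intro a _ b _ hab
    refine Finset.disjoint_left.2 fun p hpa hpb => hab ?_
    rw [← Finset.HasAntidiagonal.mem_antidiagonal.mp hpa, ← Finset.HasAntidiagonal.mem_antidiagonal.mp hpb]
  have h1 : ∑ᶠ n, ((regroup s) n).coeff g = ∑ n ∈ N, ((regroup s) n).coeff g := by
    refine finsum_eq_sum_of_support_subset _ fun n hn => ?_
    have : ((regroup s) n).coeff g ≠ 0 := hn
    rw [regroup_apply, coeff_finsetSum] at this
    obtain ⟨p, hpmem, hp⟩ := Finset.exists_ne_zero_of_sum_ne_zero this
    exact Finset.mem_coe.2 (Finset.mem_image.2 ⟨p, (Set.Finite.mem_toFinset _).2 hp,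
      Finset.HasAntidiagonal.mem_antidiagonal.mp hpmem⟩)
  have h2 : ∑ᶠ p : ℕ × ℕ, (s p).coeff g = ∑ p ∈ T, (s p).coeff g := by
    refine finsum_eq_sum_of_support_subset _ fun p hp => ?_
    exact (Set.Finite.mem_toFinset _).2 hp
  rw [h1, h2]
  have h3 : ∑ n ∈ N, ((regroup s) n).coeff g
      = ∑ p ∈ N.biUnion Finset.HasAntidiagonal.antidiagonal, (s p).coeff g := by
    rw [Finset.sum_biUnion hdisj]
    exact Finset.sum_congr rfl fun n _ => by rw [regroup_apply, coeff_finsetSum]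
  rw [h3]
  refine (Finset.sum_subset (fun p hp => ?_) (fun p _ hp => not_not.1 fun hc => hp ((Set.Finite.mem_toFinset _).2 hc))).symm
  refine Finset.mem_biUnion.2 ⟨p.1 + p.2, ?_, Finset.HasAntidiagonal.mem_antidiagonal.2 rfl⟩
  exact Finset.mem_image.2 ⟨p, hp, rfl⟩

lemma ev_mul (f g : PS) : ev x hx (f * g) = ev x hx f * ev x hx g := by
  classical
  have hrhs : ev x hx f * ev x hx g
      = (SummableFamily.mul (pows x hx (fun n => coeff n f)) (pows x hx (fun n => coeff n g))).hsum := by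
    rw [hsum_mul]
    rfl
  rw [hrhs, ← hsum_regroup, ev]
  congr 1
  apply SummableFamily.ext
  intro n
  rw [regroup_apply, pows_apply]
  have : ∀ p ∈ Finset.HasAntidiagonal.antidiagonal n,
      (SummableFamily.mul (pows x hx (fun n => coeff n f)) (pows x hx (fun n => coeff n g))) p
      = (coeff p.1 f * coeff p.2 g) • x ^ n := by
    intro p hp
    have hFS : (SummableFamily.mul (pows x hx (fun n => coeff n f)) (pows x hx (fun n => coeff n g))) p
        = (coeff p.1 f • x ^ p.1) * (coeff p.2 g • x ^ p.2) := by
      rw [SummableFamily.mul_toFun]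
      rfl
    rw [hFS, smul_mul_assoc, mul_smul_comm, smul_smul, ← _root_.pow_add, Finset.HasAntidiagonal.mem_antidiagonal.mp hp]
  rw [Finset.sum_congr rfl this, ← Finset.sum_smul, PowerSeries.coeff_mul]

lemma ev_pow (f : PS) (k : ℕ) : ev x hx (f ^ k) = (ev x hx f) ^ k := by
  induction k with
  | zero => simpa using ev_one hx
  | succ k ih => rw [pow_succ, pow_succ, ev_mul, ih]

lemma pos_orderTop_iff {z : HahnSeries Γ ℝ} :
    0 < z.orderTop ↔ ∀ γ ∈ z.support, 0 < γ := by
  constructor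
  · intro h γ hγ
    have h2 : z.orderTop ≤ (γ : WithTop Γ) := orderTop_le_of_coeff_ne_zero hγ
    exact_mod_cast lt_of_lt_of_le h h2
  · intro h
    by_cases hz : z = 0
    · simp [hz, orderTop_zero]
    · rw [orderTop_of_ne_zero hz]
      have hmem := z.isWF_support.min_mem (support_nonempty_iff.2 hz)
      exact_mod_cast h _ hmem

lemma orderTop_pow_pos (hx : 0 < x.orderTop) {n : ℕ} (hn : 1 ≤ n) : 0 < (x ^ n).orderTop := by
  induction n with
  | zero => omega
  | succ n ih =>
    rcases Nat.eq_or_lt_of_le hn with h1 | h1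
    · obtain rfl : n = 0 := by omega
      simpa using hx
    · have hn' : 1 ≤ n := by omega
      have h2 : 0 < (x ^ n).orderTop + x.orderTop :=
        lt_of_lt_of_le (ih hn') (le_add_of_nonneg_right hx.le)
      calc (0 : WithTop Γ) < (x ^ n).orderTop + x.orderTop := h2
        _ ≤ (x ^ n * x).orderTop := orderTop_add_le_mul
        _ = (x ^ (n+1)).orderTop := by rw [← pow_succ]

lemma ev_coeff (f : PS) (g : Γ) :
    (ev x hx f).coeff g = ∑ᶠ n, coeff n f * (x ^ n).coeff g := by
  rw [ev, coeff_hsum]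
  exact finsum_congr fun n => by rw [pows_apply, HahnSeries.coeff_smul, smul_eq_mul]

lemma ev_orderTop_pos (f : PS) (hf : constantCoeff f = 0) :
    0 < (ev x hx f).orderTop := by
  rw [pos_orderTop_iff]
  intro γ hγ
  obtain ⟨s, ⟨n, rfl⟩, hs⟩ := support_hsum_subset hγ
  match n with
  | 0 =>
    exfalso
    have hs' : γ ∈ ((pows x hx (fun n => coeff n f)) 0).support := hs
    have h0 : (pows x hx (fun n => coeff n f)) 0 = 0 := by
      rw [pows_apply, coeff_zero_eq_constantCoeff, hf]
      ext; simp
    rw [h0] at hs'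
    simp at hs'
  | n+1 =>
    have hsub : ((pows x hx (fun n => coeff n f)) (n+1)).support ⊆ (x ^ (n+1)).support := by
      intro g hg
      rw [pows_apply] at hg
      have : (coeff (n+1) f • x ^ (n+1)).coeff g ≠ 0 := hg
      rw [HahnSeries.coeff_smul] at this
      exact right_ne_zero_of_smul this
    have hs' : γ ∈ ((pows x hx (fun n => coeff n f)) (n+1)).support := hs
    exact (pos_orderTop_iff.mp (orderTop_pow_pos hx (by omega))) γ (hsub hs')

/-- the family of evaluations of a sequence of power series of increasing order -/
def evFam (G : ℕ → PS) (hG : ∀ j n, n < j → coeff n (G j) = 0) :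
    SummableFamily Γ ℝ ℕ where
  toFun j := ev x hx (G j)
  isPWO_iUnion_support' := by
    refine (isPWO_iUnion_support_powers (zero_le_orderTop_iff.mp hx.le)).mono ?_
    refine Set.iUnion_subset fun j g hg => ?_
    obtain ⟨s, ⟨n, rfl⟩, hs⟩ := support_hsum_subset hg
    have hsub : ((pows x hx (fun m => coeff m (G j))) n).support ⊆ (x ^ n).support := by
      intro g' hg'
      have : (coeff n (G j) • x ^ n).coeff g' ≠ 0 := hg'
      rw [HahnSeries.coeff_smul] at this
      exact right_ne_zero_of_smul this
    have hs' : g ∈ ((pows x hx (fun m => coeff m (G j))) n).support := hs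
    exact Set.mem_iUnion.2 ⟨n, hsub hs'⟩
  finite_co_support' g := by
    classical
    have hP : {n : ℕ | (x ^ n).coeff g ≠ 0}.Finite := pow_finite_co_support hx g
    refine (hP.biUnion (fun n _ => Set.finite_Iic n)).subset fun j hj => ?_
    have hj' : (ev x hx (G j)).coeff g ≠ 0 := hj
    rw [ev_coeff] at hj'
    have : ∃ n, coeff n (G j) * (x ^ n).coeff g ≠ 0 := by
      by_contra hc
      push_neg at hc
      exact hj' (finsum_eq_zero_of_forall_eq_zero hc)
    obtain ⟨n, hn⟩ := this
    have h1 : coeff n (G j) ≠ 0 := left_ne_zero_of_mul hn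
    have h2 : (x ^ n).coeff g ≠ 0 := right_ne_zero_of_mul hn
    have hjn : j ≤ n := by
      by_contra hc
      exact h1 (hG j n (by omega))
    exact Set.mem_biUnion h2 hjn

@[simp] lemma evFam_apply (G : ℕ → PS) (hG : ∀ j n, n < j → coeff n (G j) = 0) (j : ℕ) :
    evFam hx G hG j = ev x hx (G j) := rfl

lemma hsum_evFam (G : ℕ → PS) (hG : ∀ j n, n < j → coeff n (G j) = 0) :
    (evFam hx G hG).hsum = ev x hx (sumPS G) := by
  classical
  ext g
  rw [coeff_hsum, ev_coeff]
  have hP : {n : ℕ | (x ^ n).coeff g ≠ 0}.Finite := pow_finite_co_support hx g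
  set Pf : Finset ℕ := hP.toFinset with hPf
  set N : ℕ := Pf.sup id + 1 with hNdef
  have hmemP : ∀ n ∈ Pf, n < N := by
    intro n hn
    have := Finset.le_sup (f := id) hn
    simp only [id_eq] at this
    omega
  have hev : ∀ f : PS, ∑ᶠ n, coeff n f * (x ^ n).coeff g
      = ∑ n ∈ Pf, coeff n f * (x ^ n).coeff g := by
    intro f
    refine finsum_eq_sum_of_support_subset _ fun n hn => ?_
    have : (x ^ n).coeff g ≠ 0 := fun hc => hn (by simp [Function.mem_support, hc])
    simpa [hPf] using this
  have hL : ∑ᶠ j, ((evFam hx G hG) j).coeff g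
      = ∑ j ∈ Finset.range N, ∑ n ∈ Pf, coeff n (G j) * (x ^ n).coeff g := by
    rw [finsum_congr (fun j => by rw [evFam_apply, ev_coeff, hev (G j)])]
    refine finsum_eq_sum_of_support_subset _ fun j hj => ?_
    rw [Function.mem_support] at hj
    have : ∃ n ∈ Pf, coeff n (G j) * (x ^ n).coeff g ≠ 0 := by
      by_contra hc
      push_neg at hc
      exact hj (Finset.sum_eq_zero hc)
    obtain ⟨n, hnP, hn⟩ := this
    have h1 : coeff n (G j) ≠ 0 := left_ne_zero_of_mul hn
    have hjn : j ≤ n := by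
      by_contra hc
      exact h1 (hG j n (by omega))
    have := hmemP n hnP
    simp only [Finset.coe_range, Set.mem_Iio]
    omega
  rw [hL, hev (sumPS G), Finset.sum_comm]
  refine Finset.sum_congr rfl fun n hn => ?_
  rw [← Finset.sum_mul, ← coeff_sumPS_eq hG n N (hmemP n hn)]

lemma coeff_exp_real (n : ℕ) : coeff n (exp ℝ) = 1 / n.factorial := by
  rw [coeff_exp]
  rw [eq_ratCast]
  push_cast
  rfl

lemma constantCoeff_logPS : constantCoeff logPS = 0 := by
  have : coeff 0 logPS = logC 0 := coeff_logPS 0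
  rw [coeff_zero_eq_constantCoeff] at this
  simpa [logC] using this

lemma ev_exp_add {x y : HahnSeries Γ ℝ} (hx : 0 < x.orderTop) (hy : 0 < y.orderTop)
    (hxy : 0 < (x + y).orderTop) :
    ev (x + y) hxy (exp ℝ) = ev x hx (exp ℝ) * ev y hy (exp ℝ) := by
  classical
  have hrhs : ev x hx (exp ℝ) * ev y hy (exp ℝ)
      = (SummableFamily.mul (pows x hx fun n => coeff n (exp ℝ))
          (pows y hy fun n => coeff n (exp ℝ))).hsum := by
    rw [hsum_mul]
    rfl
  rw [hrhs, ← hsum_regroup, ev]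
  congr 1
  apply SummableFamily.ext
  intro n
  rw [regroup_apply, pows_apply]
  have hterm : ∀ p ∈ Finset.HasAntidiagonal.antidiagonal n,
      (SummableFamily.mul (pows x hx fun n => coeff n (exp ℝ))
        (pows y hy fun n => coeff n (exp ℝ))) p
      = ((1 / p.1.factorial : ℝ) * (1 / p.2.factorial)) • (x ^ p.1 * y ^ p.2) := by
    intro p hp
    have h1 : (SummableFamily.mul (pows x hx fun n => coeff n (exp ℝ))
        (pows y hy fun n => coeff n (exp ℝ))) p
        = (coeff p.1 (exp ℝ) • x ^ p.1) * (coeff p.2 (exp ℝ) • y ^ p.2) := by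
      rw [SummableFamily.mul_toFun]
      rfl
    rw [h1, coeff_exp_real, coeff_exp_real, smul_mul_assoc, mul_smul_comm, smul_smul]
  rw [Finset.sum_congr rfl hterm, Finset.Nat.sum_antidiagonal_eq_sum_range_succ_mk,
    coeff_exp_real, add_pow, Finset.smul_sum]
  refine Finset.sum_congr rfl fun k hk => ?_
  have hkn : k ≤ n := Finset.mem_range_succ_iff.mp hk
  have hcast : ((n.choose k : ℕ) : HahnSeries Γ ℝ) = HahnSeries.C ((n.choose k : ℕ) : ℝ) := by
    rw [map_natCast]
  rw [hcast, mul_comm (x ^ k * y ^ (n - k)) _, HahnSeries.C_mul_eq_smul, smul_smul]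
  congr 1
  have hnat := Nat.choose_mul_factorial_mul_factorial hkn
  have hc : ((n.choose k : ℝ)) * (k.factorial : ℝ) * ((n-k).factorial : ℝ) = (n.factorial : ℝ) := by
    exact_mod_cast congrArg (Nat.cast : ℕ → ℝ) hnat
  have h1 : (k.factorial : ℝ) ≠ 0 := by positivity
  have h2 : ((n-k).factorial : ℝ) ≠ 0 := by positivity
  have h3 : (n.factorial : ℝ) ≠ 0 := by positivity
  field_simp
  linarith [hc]

/-- the logarithm family at an infinitesimal argument -/
def logFam (h : HahnSeries Γ ℝ) (hh : 0 < h.orderTop) : SummableFamily Γ ℝ ℕ where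
  toFun j := ((-1 : ℝ) ^ j / (j + 1 : ℝ)) • h ^ (j + 1)
  isPWO_iUnion_support' := by
    refine (isPWO_iUnion_support_powers (zero_le_orderTop_iff.mp hh.le)).mono ?_
    refine Set.iUnion_subset fun j g hg => ?_
    have : (((-1 : ℝ) ^ j / (j + 1 : ℝ)) • h ^ (j+1)).coeff g ≠ 0 := hg
    rw [HahnSeries.coeff_smul] at this
    exact Set.mem_iUnion.2 ⟨j+1, right_ne_zero_of_smul this⟩
  finite_co_support' g := by
    have hS : {m : ℕ | (h ^ m).coeff g ≠ 0}.Finite := pow_finite_co_support hh g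
    refine (hS.preimage (Set.injOn_of_injective Nat.succ_injective)).subset fun j hj => ?_
    have : (((-1 : ℝ) ^ j / (j + 1 : ℝ)) • h ^ (j+1)).coeff g ≠ 0 := hj
    rw [HahnSeries.coeff_smul] at this
    exact right_ne_zero_of_smul this

@[simp] lemma logFam_apply (h : HahnSeries Γ ℝ) (hh : 0 < h.orderTop) (j : ℕ) :
    logFam h hh j = ((-1 : ℝ) ^ j / (j + 1 : ℝ)) • h ^ (j + 1) := rfl

lemma logFam_hsum_eq_ev (h : HahnSeries Γ ℝ) (hh : 0 < h.orderTop) :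
    (logFam h hh).hsum = ev h hh logPS := by
  rw [ev, ← hsum_embDomain (logFam h hh) ⟨Nat.succ, Nat.succ_injective⟩]
  congr 1
  apply SummableFamily.ext
  intro n
  match n with
  | 0 =>
    have h0 : ((logFam h hh).embDomain ⟨Nat.succ, Nat.succ_injective⟩) 0
        = 0 := by
      apply SummableFamily.embDomain_notin_range
      rintro ⟨x, hx⟩
      exact Nat.succ_ne_zero x hx
    rw [h0, pows_apply, coeff_logPS]
    rw [show logC 0 = 0 by simp [logC]]
    exact (zero_smul ℝ _).symm
  | j+1 =>
    have himg : (logFam h hh).embDomain ⟨Nat.succ, Nat.succ_injective⟩ (Nat.succ j)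
        = logFam h hh j := SummableFamily.embDomain_image _ _
    rw [himg, pows_apply, coeff_logPS, logC_succ, logFam_apply]

/-- the logarithm of `1 + h` -/
def L (h : HahnSeries Γ ℝ) : HahnSeries Γ ℝ :=
  if hh : 0 < h.orderTop then (logFam h hh).hsum else 0

lemma L_eq {h : HahnSeries Γ ℝ} (hh : 0 < h.orderTop) : L h = (logFam h hh).hsum := dif_pos hh

lemma L_eq_ev {h : HahnSeries Γ ℝ} (hh : 0 < h.orderTop) : L h = ev h hh logPS :=
  (L_eq hh).trans (logFam_hsum_eq_ev h hh)

lemma L_orderTop_pos (h : HahnSeries Γ ℝ) : 0 < (L h).orderTop := by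
  by_cases hh : 0 < h.orderTop
  · rw [L_eq_ev hh]
    exact ev_orderTop_pos hh logPS constantCoeff_logPS
  · rw [L, dif_neg hh, orderTop_zero]
    exact WithTop.top_pos.trans_le le_rfl

lemma L_zero : L (0 : HahnSeries Γ ℝ) = 0 := by
  have h0 : (0 : WithTop Γ) < (0 : HahnSeries Γ ℝ).orderTop := by
    rw [orderTop_zero]; exact WithTop.top_pos
  rw [L_eq h0, hsum_eq_single 0 (fun n hn => by simp [logFam_apply])]
  simp

lemma L_ev_u (y : HahnSeries Γ ℝ) (hy : 0 < y.orderTop) :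
    L (ev y hy u) = y := by
  have hEy : 0 < (ev y hy u).orderTop := ev_orderTop_pos hy u constantCoeff_u
  rw [L_eq_ev hEy]
  have h1 : pows (ev y hy u) hEy (fun n => coeff n logPS)
      = evFam hy G (fun j n hlt => coeff_G_eq_zero hlt) := by
    apply SummableFamily.ext
    intro j
    rw [pows_apply, evFam_apply, G, ev_rsmul, ev_pow, coeff_logPS]
  rw [ev, h1, hsum_evFam]
  have h2 : sumPS G = X := F_eq_X
  rw [h2, ev_X]
lemma orderTop_pos_add {x y : HahnSeries Γ ℝ} (hx' : 0 < x.orderTop) (hy : 0 < y.orderTop) :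
    0 < (x + y).orderTop :=
  lt_of_lt_of_le (lt_min hx' hy) min_orderTop_le_orderTop_add

lemma orderTop_pos_mul {x y : HahnSeries Γ ℝ} (hx' : 0 < x.orderTop) (hy : 0 < y.orderTop) :
    0 < (x * y).orderTop := by
  have h1 : (0 : WithTop Γ) < x.orderTop + y.orderTop :=
    lt_of_lt_of_le hx' (le_add_of_nonneg_right hy.le)
  exact lt_of_lt_of_le h1 orderTop_add_le_mul

lemma orderTop_pos_smul (r : ℝ) {x : HahnSeries Γ ℝ} (hx' : 0 < x.orderTop) :
    0 < (r • x).orderTop :=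
  lt_of_lt_of_le hx' (not_lt.mp (orderTop_smul_not_lt r x))

lemma orderTop_nonneg_pow {x : HahnSeries Γ ℝ} (hx0 : 0 ≤ x.orderTop) (m : ℕ) :
    0 ≤ (x ^ m).orderTop := by
  induction m with
  | zero => rw [pow_zero, orderTop_one]
  | succ m ih =>
    rw [pow_succ]
    exact le_trans (add_nonneg ih hx0) orderTop_add_le_mul

lemma le_orderTop_pow' {x : HahnSeries Γ ℝ} (hx0 : 0 ≤ x.orderTop) {m : ℕ} (hm : 1 ≤ m) :
    x.orderTop ≤ (x ^ m).orderTop := by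
  induction m with
  | zero => omega
  | succ m ih =>
    rcases Nat.eq_or_lt_of_le hm with h1 | h1
    · obtain rfl : m = 0 := by omega
      rw [pow_one]
    · have hm' : 1 ≤ m := by omega
      rw [pow_succ]
      calc x.orderTop = 0 + x.orderTop := (zero_add _).symm
        _ ≤ (x ^ m).orderTop + x.orderTop :=
            add_le_add_left (orderTop_nonneg_pow hx0 m) _
        _ ≤ (x ^ m * x).orderTop := orderTop_add_le_mul

lemma orderTop_pow_sub {h k : HahnSeries Γ ℝ} (hh : 0 < h.orderTop) (hk : 0 < k.orderTop)
    (τ : WithTop Γ) (hτh : τ ≤ h.orderTop) (hτk : τ ≤ k.orderTop) (hτ0 : 0 ≤ τ) (m : ℕ) :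
    (h - k).orderTop + τ ≤ (h ^ (m+2) - k ^ (m+2)).orderTop := by
  induction m with
  | zero =>
    have hid : h ^ 2 - k ^ 2 = h * (h - k) + (h - k) * k := by ring
    rw [hid]
    refine le_trans (le_min ?_ ?_) min_orderTop_le_orderTop_add
    · calc (h-k).orderTop + τ = τ + (h-k).orderTop := add_comm _ _
        _ ≤ h.orderTop + (h-k).orderTop := add_le_add_left hτh _
        _ ≤ (h * (h-k)).orderTop := orderTop_add_le_mul
    · calc (h-k).orderTop + τ ≤ (h-k).orderTop + k.orderTop := add_le_add_right hτk _
        _ ≤ ((h-k) * k).orderTop := orderTop_add_le_mul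
  | succ m ih =>
    have hid : h ^ (m+3) - k ^ (m+3) = h ^ (m+2) * (h - k) + (h ^ (m+2) - k ^ (m+2)) * k := by
      ring
    rw [hid]
    refine le_trans (le_min ?_ ?_) min_orderTop_le_orderTop_add
    · calc (h-k).orderTop + τ = τ + (h-k).orderTop := add_comm _ _
        _ ≤ (h ^ (m+2)).orderTop + (h-k).orderTop :=
            add_le_add_left (le_trans hτh (le_orderTop_pow' hh.le (by omega))) _
        _ ≤ (h ^ (m+2) * (h-k)).orderTop := orderTop_add_le_mul
    · calc (h-k).orderTop + τ = ((h-k).orderTop + τ) + 0 := (add_zero _).symm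
        _ ≤ ((h-k).orderTop + τ) + k.orderTop := add_le_add_right hk.le _
        _ ≤ (h ^ (m+2) - k ^ (m+2)).orderTop + k.orderTop := add_le_add_left ih _
        _ ≤ ((h ^ (m+2) - k ^ (m+2)) * k).orderTop := orderTop_add_le_mul

lemma L_inj {h k : HahnSeries Γ ℝ} (hh : 0 < h.orderTop) (hk : 0 < k.orderTop)
    (heq : L h = L k) : h = k := by
  by_contra hne
  have hsub : h - k ≠ 0 := sub_ne_zero.2 hne
  set d : Γ := (h - k).order with hd
  have hD : (h - k).orderTop = (d : WithTop Γ) := by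
    rw [orderTop_of_ne_zero hsub, hd, order_of_ne hsub]
  have hco : (h - k).coeff d ≠ 0 := by
    have hmem := (h-k).isWF_support.min_mem (support_nonempty_iff.2 hsub)
    rw [hd, order_of_ne hsub]
    exact hmem
  set τ : WithTop Γ := min h.orderTop k.orderTop with hτ
  have hτ0 : 0 < τ := lt_min hh hk
  have hlt : (d : WithTop Γ) < (h - k).orderTop + τ := by
    rw [hD]
    calc (d : WithTop Γ) = (d : WithTop Γ) + 0 := (add_zero _).symm
      _ < (d : WithTop Γ) + τ := WithTop.add_lt_add_left (WithTop.coe_ne_top) hτ0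
  have hzero : ∀ j : ℕ, j ≠ 0 → ((logFam h hh - logFam k hk) j).coeff d = 0 := by
    intro j hj
    obtain ⟨m, rfl⟩ := Nat.exists_eq_succ_of_ne_zero hj
    have hterm : ((logFam h hh - logFam k hk) (m+1)).coeff d
        = ((-1:ℝ)^(m+1)/((m+1) + 1 : ℝ)) * (h ^ (m+2) - k ^ (m+2)).coeff d := by
      rw [SummableFamily.sub_apply, logFam_apply, logFam_apply, ← smul_sub, HahnSeries.coeff_smul, smul_eq_mul]
      norm_num
    rw [hterm, coeff_eq_zero_of_lt_orderTop
      (lt_of_lt_of_le hlt (orderTop_pow_sub hh hk τ (min_le_left _ _) (min_le_right _ _)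
        hτ0.le m)), mul_zero]
  have h0 : (L h - L k).coeff d = 0 := by
    rw [heq, sub_self]
    rfl
  rw [L_eq hh, L_eq hk, ← hsum_sub, coeff_hsum, finsum_eq_single _ 0 hzero] at h0
  have h1 : (logFam h hh - logFam k hk) 0 = h - k := by
    rw [SummableFamily.sub_apply, logFam_apply, logFam_apply]
    norm_num
  rw [h1] at h0
  exact hco h0

lemma ev_L_u {h : HahnSeries Γ ℝ} (hh : 0 < h.orderTop) :
    ev (L h) (L_orderTop_pos h) u = h :=
  L_inj (ev_orderTop_pos (L_orderTop_pos h) u constantCoeff_u) hh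
    (L_ev_u (L h) (L_orderTop_pos h))

lemma one_add_ev_u {y : HahnSeries Γ ℝ} (hy : 0 < y.orderTop) :
    ev y hy (exp ℝ) = 1 + ev y hy u := by
  have h1 : (1 : PS) + u = exp ℝ := by rw [one_add_u]
  rw [← h1, ev_add, ev_one]

lemma L_add_mul {h k : HahnSeries Γ ℝ} (hh : 0 < h.orderTop) (hk : 0 < k.orderTop) :
    L (h + k + h * k) = L h + L k := by
  have hs : 0 < (L h + L k).orderTop :=
    orderTop_pos_add (L_orderTop_pos h) (L_orderTop_pos k)
  have key : ev (L h + L k) hs u = h + k + h * k := by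
    have h2 := ev_exp_add (L_orderTop_pos h) (L_orderTop_pos k) hs
    rw [one_add_ev_u, one_add_ev_u, one_add_ev_u, ev_L_u hh, ev_L_u hk] at h2
    have h3 : (1 : HahnSeries Γ ℝ) + ev (L h + L k) hs u = 1 + (h + k + h * k) := by
      rw [h2]
      ring
    exact add_left_cancel h3
  rw [← key, L_ev_u]

/-- the logarithm on positive units of the valuation ring -/
def logH (f : HahnSeries Γ ℝ) : HahnSeries Γ ℝ :=
  HahnSeries.C (Real.log (f.coeff 0)) + L ((f.coeff 0)⁻¹ • f - 1)

lemma coeff_zero_eq_zero {h : HahnSeries Γ ℝ} (hh : 0 < h.orderTop) : h.coeff 0 = 0 :=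
  coeff_eq_zero_of_lt_orderTop (by rw [WithTop.coe_zero]; exact hh)

lemma C_coeff_zero (a : ℝ) : (HahnSeries.C a : HahnSeries Γ ℝ).coeff 0 = a :=
  coeff_single_same 0 a

lemma C_coeff_ne (a : ℝ) {γ : Γ} (hγ : γ ≠ 0) : (HahnSeries.C a : HahnSeries Γ ℝ).coeff γ = 0 :=
  coeff_single_of_ne hγ

lemma coeff_zero_form {a : ℝ} {h : HahnSeries Γ ℝ} (hh : 0 < h.orderTop) :
    (HahnSeries.C a * (1 + h)).coeff 0 = a := by
  rw [mul_add, mul_one, HahnSeries.coeff_add, HahnSeries.C_mul_eq_smul, HahnSeries.coeff_smul,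
    coeff_zero_eq_zero hh, C_coeff_zero]
  simp

lemma smul_form {a : ℝ} (ha : a ≠ 0) {h : HahnSeries Γ ℝ} :
    a⁻¹ • (HahnSeries.C a * (1 + h)) = 1 + h := by
  rw [← HahnSeries.C_mul_eq_smul, ← mul_assoc, ← map_mul, inv_mul_cancel₀ ha, HahnSeries.C_one,
    one_mul]

lemma logH_form {a : ℝ} (ha : a ≠ 0) {h : HahnSeries Γ ℝ} (hh : 0 < h.orderTop) :
    logH (HahnSeries.C a * (1 + h)) = HahnSeries.C (Real.log a) + L h := by
  rw [logH, coeff_zero_form hh, smul_form ha, add_sub_cancel_left]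

lemma C_form {a : ℝ} (ha : a ≠ 0) {h : HahnSeries Γ ℝ} (hh : 0 < h.orderTop) :
    HahnSeries.C a * (1 + h) = HahnSeries.C a + a • h := by
  rw [mul_add, mul_one, HahnSeries.C_mul_eq_smul]

lemma form_C {a : ℝ} (ha : a ≠ 0) {h : HahnSeries Γ ℝ} :
    HahnSeries.C a + h = HahnSeries.C a * (1 + a⁻¹ • h) := by
  rw [mul_add, mul_one, HahnSeries.C_mul_eq_smul, smul_smul, mul_inv_cancel₀ ha, one_smul]

end Hahn

end Stmt12Aux


/-- Let `Γ` be a divisible ordered abelian group and `𝓡 = ℝ((t^Γ))`. The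
logarithmic series `L(x) = Σ_{j≥1} (-1)^{j+1} x^j / j` converges (is a
well-defined Hahn series, the sum of a summable family) when evaluated at any
infinitesimal `h` (series with support in `Γ_{>0}`), and the map
`log : ℝ_{>0} + m_𝓡 → O_𝓡` defined by `log (a(1+h)) = log a + L h` is a group
isomorphism from the multiplicative group of positive units of `O_𝓡` (the
elements of `ℝ_{>0} + m_𝓡`) onto the additive group `(O_𝓡, +)` (the series
with support in `Γ_{≥0}`), extending the real logarithm. -/
theorem stmt_12 (Γ : Type*) [AddCommGroup Γ] [LinearOrder Γ] [IsOrderedAddMonoid Γ]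
    (hdiv : ∀ γ : Γ, ∀ n : ℕ, 1 ≤ n → ∃ δ : Γ, n • δ = γ) :
    ∃ L log : HahnSeries Γ ℝ → HahnSeries Γ ℝ,
      -- the logarithmic series is summable at infinitesimal arguments and `L`
      -- is its sum: the `j`-th term (for `j ≥ 1`, here indexed by `j+1`) is
      -- `((-1)^(j+1)/j) • h^j`
      (∀ h : HahnSeries Γ ℝ, (∀ γ ∈ h.support, 0 < γ) →
        ∃ S : HahnSeries.SummableFamily Γ ℝ ℕ,
          (∀ j : ℕ, S j = (((-1 : ℝ) ^ j / (j + 1 : ℝ)) • h ^ (j + 1))) ∧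
          L h = S.hsum) ∧
      -- defining formula for `log`
      (∀ a : ℝ, ∀ h : HahnSeries Γ ℝ, 0 < a → (∀ γ ∈ h.support, 0 < γ) →
        log (HahnSeries.C a * (1 + h)) = HahnSeries.C (Real.log a) + L h) ∧
      -- `log` extends the real logarithm
      (∀ a : ℝ, 0 < a → log (HahnSeries.C a) = HahnSeries.C (Real.log a)) ∧
      -- `log` is a group homomorphism on the positive units of `O_𝓡`
      (∀ f g : HahnSeries Γ ℝ,
        (∃ a h, 0 < a ∧ (∀ γ ∈ h.support, 0 < γ) ∧ f = HahnSeries.C a + h) →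
        (∃ a h, 0 < a ∧ (∀ γ ∈ h.support, 0 < γ) ∧ g = HahnSeries.C a + h) →
        log (f * g) = log f + log g) ∧
      -- `log` is a bijection from the positive units of `O_𝓡` onto `O_𝓡`
      Set.BijOn log
        {f : HahnSeries Γ ℝ |
          ∃ a h, 0 < a ∧ (∀ γ ∈ h.support, 0 < γ) ∧ f = HahnSeries.C a + h}
        {g : HahnSeries Γ ℝ | ∀ γ ∈ g.support, 0 ≤ γ} := by
  classical
  open Stmt12Aux in
  refine ⟨Stmt12Aux.L, Stmt12Aux.logH, ?_, ?_, ?_, ?_, ?_⟩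
  · -- summability
    intro h hsupp
    have hh : 0 < h.orderTop := pos_orderTop_iff.mpr hsupp
    exact ⟨logFam h hh, fun j => logFam_apply h hh j, L_eq hh⟩
  · -- defining formula
    intro a h ha hsupp
    exact logH_form (ne_of_gt ha) (pos_orderTop_iff.mpr hsupp)
  · -- extends real log
    intro a ha
    have h0 : (0 : WithTop Γ) < (0 : HahnSeries Γ ℝ).orderTop := by
      rw [HahnSeries.orderTop_zero]; exact WithTop.top_pos
    have := logH_form (Γ := Γ) (ne_of_gt ha) h0
    rw [add_zero, mul_one, L_zero, add_zero] at this
    exact this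
  · -- homomorphism
    rintro f g ⟨a, h, ha, hsupp, rfl⟩ ⟨b, k, hb, hksupp, rfl⟩
    set h' := a⁻¹ • h with hh'def
    set k' := b⁻¹ • k with hk'def
    have hh' : 0 < h'.orderTop := orderTop_pos_smul _ (pos_orderTop_iff.mpr hsupp)
    have hk' : 0 < k'.orderTop := orderTop_pos_smul _ (pos_orderTop_iff.mpr hksupp)
    have hf : HahnSeries.C a + h = HahnSeries.C a * (1 + h') := form_C (ne_of_gt ha)
    have hg : HahnSeries.C b + k = HahnSeries.C b * (1 + k') := form_C (ne_of_gt hb)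
    set m := h' + k' + h' * k' with hmdef
    have hm : 0 < m.orderTop :=
      orderTop_pos_add (orderTop_pos_add hh' hk') (orderTop_pos_mul hh' hk')
    have hprod : (HahnSeries.C a + h) * (HahnSeries.C b + k)
        = HahnSeries.C (a * b) * (1 + m) := by
      rw [hf, hg, map_mul, hmdef]
      ring
    rw [hprod, hf, hg, logH_form (by positivity : a * b ≠ 0) hm,
      logH_form (ne_of_gt ha) hh', logH_form (ne_of_gt hb) hk',
      Real.log_mul (ne_of_gt ha) (ne_of_gt hb), map_add, L_add_mul hh' hk']
    abel
  · -- bijection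
    constructor
    · -- MapsTo
      rintro f ⟨a, h, ha, hsupp, rfl⟩
      have hh' : 0 < (a⁻¹ • h).orderTop := orderTop_pos_smul _ (pos_orderTop_iff.mpr hsupp)
      rw [Set.mem_setOf_eq, form_C (ne_of_gt ha), logH_form (ne_of_gt ha) hh']
      intro γ hγ
      rcases HahnSeries.support_add_subset _ _ hγ with hc | hl
      · have := HahnSeries.support_single_subset hc
        simp only [Set.mem_singleton_iff] at this
        exact this ▸ le_rfl
      · exact (pos_orderTop_iff.mp (L_orderTop_pos _) γ hl).le
    constructor
    · -- InjOn
      rintro f ⟨a, h, ha, hsupp, rfl⟩ g ⟨b, k, hb, hksupp, rfl⟩ heq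
      have hh' : 0 < (a⁻¹ • h).orderTop := orderTop_pos_smul _ (pos_orderTop_iff.mpr hsupp)
      have hk' : 0 < (b⁻¹ • k).orderTop := orderTop_pos_smul _ (pos_orderTop_iff.mpr hksupp)
      rw [form_C (ne_of_gt ha), form_C (ne_of_gt hb), logH_form (ne_of_gt ha) hh',
        logH_form (ne_of_gt hb) hk'] at heq
      have hcoeff := congrArg (fun z => HahnSeries.coeff z 0) heq
      simp only [HahnSeries.coeff_add, C_coeff_zero,
        coeff_zero_eq_zero (L_orderTop_pos _), add_zero] at hcoeff
      have hab : a = b := by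
        rw [← Real.exp_log ha, ← Real.exp_log hb, hcoeff]
      subst hab
      rw [hcoeff] at heq
      have hLL : Stmt12Aux.L (a⁻¹ • h) = Stmt12Aux.L (a⁻¹ • k) := add_left_cancel heq
      have : a⁻¹ • h = a⁻¹ • k := L_inj hh' hk' hLL
      rw [form_C (ne_of_gt ha), form_C (ne_of_gt ha), this]
    · -- SurjOn
      rintro g hT
      simp only [Set.mem_setOf_eq] at hT
      set c := g.coeff 0 with hcdef
      set k := g - HahnSeries.C c with hkdef
      have hk : 0 < k.orderTop := by
        rw [pos_orderTop_iff]
        intro γ hγ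
        have hγ0 : γ ≠ 0 := by
          intro h0
          apply hγ
          rw [hkdef, h0, HahnSeries.coeff_sub, C_coeff_zero, hcdef, sub_self]
        have hgγ : g.coeff γ ≠ 0 := by
          intro h0
          apply hγ
          rw [hkdef, HahnSeries.coeff_sub, h0, C_coeff_ne c hγ0, sub_zero]
        exact lt_of_le_of_ne (hT γ hgγ) (Ne.symm hγ0)
      set E := ev k hk u with hEdef
      have hE : 0 < E.orderTop := ev_orderTop_pos hk u constantCoeff_u
      refine ⟨HahnSeries.C (Real.exp c) * (1 + E), ⟨Real.exp c, Real.exp c • E,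
        Real.exp_pos c, pos_orderTop_iff.mp (orderTop_pos_smul _ hE), ?_⟩, ?_⟩
      · rw [mul_add, mul_one, HahnSeries.C_mul_eq_smul]
      · rw [logH_form (Real.exp_ne_zero c) hE, Real.log_exp, hEdef, L_ev_u k hk, hkdef]
        rw [add_comm, sub_add_cancel]
end
end

section
/- Let Γ be an archimedean ordered abelian group with Γ ≅ ℚ (as ordered groups), viewed as a subgroup of ℝ. Then there exists r ∈ ℝ_{>0} such that Γ = rℚ := { rq : q ∈ ℚ }. -/
/-- Let `Γ` be a subgroup of `(ℝ, +)` that is order-isomorphic to `ℚ` (as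
ordered groups). Then there exists `r ∈ ℝ_{>0}` such that
`Γ = rℚ = { r * q : q ∈ ℚ }`. -/
theorem stmt_16 (Γ : AddSubgroup ℝ) (e : Γ ≃+ ℚ) (he : StrictMono e) :
    ∃ r : ℝ, 0 < r ∧ (Γ : Set ℝ) = {x : ℝ | ∃ q : ℚ, x = r * q} := by
  -- the composite additive hom `ℚ →+ ℝ`
  set f : ℚ →+ ℝ := Γ.subtype.comp e.symm.toAddMonoidHom with hf
  have hsymm : StrictMono e.symm := by
    intro a b hab
    have : e (e.symm a) < e (e.symm b) := by simpa using hab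
    exact he.lt_iff_lt.mp this
  have hr0 : (0:ℝ) < f 1 := by
    have h0 : e.symm 0 = 0 := map_zero _
    have := hsymm (show (0:ℚ) < 1 by norm_num)
    rw [h0] at this
    exact this
  have key : ∀ q : ℚ, f q = f 1 * q := by
    intro q
    have : f (q • (1:ℚ)) = q • f 1 := map_rat_smul f q 1
    simpa [smul_eq_mul, Rat.smul_def, mul_comm] using this
  refine ⟨f 1, hr0, ?_⟩
  ext x
  constructor
  · intro hx
    exact ⟨e ⟨x, hx⟩, by simpa [hf] using key (e ⟨x, hx⟩)⟩
  · rintro ⟨q, rfl⟩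
    have : f q ∈ Γ := (e.symm q).2
    rwa [key q] at this
end
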